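/- Let a > 0 and let 𝒞 denote the set of bounded continuous functions v : [0,∞) → ℝ with v(r) > a for all r ≥ 0, regarded as a subset of the Banach space C_b([0,∞);ℝ) of bounded continuous functions with the supremum norm. Let F, F̃ : 𝒞 → C_b([0,∞);ℝ) satisfy the monotonicity property: whenever v, ṽ ∈ 𝒞 and v(r) ≤ ṽ(r) for all r ≥ 0, then F(v)(r) ≤ F̃(ṽ)(r) for all r ≥ 0. Assume F̃ is locally Lipschitz with respect to the supremum norm. Let ũ : [0,T̃) → 𝒞 be a differentiable curve with ũ'(t) = F̃(ũ(t)) for all t, let u : [0,T) → 𝒞 be a differentiable curve with u'(t) = F(u(t)) for all t, and suppose u(0) = ũ(0). Then ũ(t)(r) ≥ u(t)(r) for all t ∈ [0, min(T, T̃)) and all r ≥ 0. -/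
import Mathlib


open Set

private lemma bcf_sup_sub (p q : BoundedContinuousFunction {r : ℝ // 0 ≤ r} ℝ) :
    p ⊔ q - q = (p - q) ⊔ 0 := by
  ext x
  simp only [BoundedContinuousFunction.coe_sub, BoundedContinuousFunction.coe_sup,
    BoundedContinuousFunction.coe_zero, Pi.sub_apply, Pi.sup_apply, Pi.zero_apply]
  rw [← max_sub_sub_right, sub_self]

private lemma bcf_val_le_norm_sup (w : BoundedContinuousFunction {r : ℝ // 0 ≤ r} ℝ)
    (x : {r : ℝ // 0 ≤ r}) : w x ≤ ‖w ⊔ 0‖ := by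
  have h1 : w x ≤ (w ⊔ 0) x := by
    simp only [BoundedContinuousFunction.coe_sup, Pi.sup_apply,
      BoundedContinuousFunction.coe_zero, Pi.zero_apply]
    exact le_max_left _ _
  exact h1.trans ((le_abs_self _).trans ((w ⊔ 0).norm_coe_le_norm x))

private lemma bcf_norm_sup_eq_zero (w : BoundedContinuousFunction {r : ℝ // 0 ≤ r} ℝ)
    (hw : ∀ x, w x ≤ 0) : ‖w ⊔ 0‖ = 0 := by
  have : w ⊔ 0 = 0 := by
    ext x
    simp only [BoundedContinuousFunction.coe_sup, Pi.sup_apply,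
      BoundedContinuousFunction.coe_zero, Pi.zero_apply]
    exact max_eq_right (hw x)
  rw [this, norm_zero]

set_option maxHeartbeats 1000000 in
private lemma key_local (a : ℝ)
    (F Ftil : BoundedContinuousFunction {r : ℝ // 0 ≤ r} ℝ →
      BoundedContinuousFunction {r : ℝ // 0 ≤ r} ℝ)
    (hmono : ∀ v vtil : BoundedContinuousFunction {r : ℝ // 0 ≤ r} ℝ,
      (∀ x, a < v x) → (∀ x, a < vtil x) → (∀ x, v x ≤ vtil x) →
      ∀ x, F v x ≤ Ftil vtil x)
    (hlip : ∀ v : BoundedContinuousFunction {r : ℝ // 0 ≤ r} ℝ, (∀ x, a < v x) →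
      ∃ ε > (0:ℝ), ∃ K : NNReal, LipschitzOnWith K Ftil
        (Metric.ball v ε ∩ {w : BoundedContinuousFunction {r : ℝ // 0 ≤ r} ℝ | ∀ x, a < w x}))
    (T Ttil : ℝ)
    (util u : ℝ → BoundedContinuousFunction {r : ℝ // 0 ≤ r} ℝ)
    (hutilmem : ∀ t ∈ Ico (0:ℝ) Ttil, ∀ x, a < util t x)
    (hutil : ∀ t ∈ Ico (0:ℝ) Ttil, HasDerivWithinAt util (Ftil (util t)) (Ico 0 Ttil) t)
    (humem : ∀ t ∈ Ico (0:ℝ) T, ∀ x, a < u t x)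
    (hu : ∀ t ∈ Ico (0:ℝ) T, HasDerivWithinAt u (F (u t)) (Ico 0 T) t)
    (τ : ℝ) (hτ0 : 0 ≤ τ) (hτT : τ < min T Ttil)
    (hle : ∀ x, u τ x ≤ util τ x) :
    ∃ δ > (0:ℝ), ∀ t ∈ Icc τ (τ + δ), ∀ x, u t x ≤ util t x := by
  set T' := min T Ttil with hT'def
  have hsubT : Ico (0:ℝ) T' ⊆ Ico 0 T := Ico_subset_Ico_right (min_le_left _ _)
  have hsubTtil : Ico (0:ℝ) T' ⊆ Ico 0 Ttil := Ico_subset_Ico_right (min_le_right _ _)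
  have hτmem : τ ∈ Ico (0:ℝ) T' := ⟨hτ0, hτT⟩
  obtain ⟨ε, hε, K, hK⟩ := hlip (util τ) (hutilmem τ (hsubTtil hτmem))
  have hcu : ContinuousOn u (Ico 0 T') := fun s hs =>
    ((hu s (hsubT hs)).continuousWithinAt).mono hsubT
  have hcutil : ContinuousOn util (Ico 0 T') := fun s hs =>
    ((hutil s (hsubTtil hs)).continuousWithinAt).mono hsubTtil
  set h : ℝ → ℝ := fun t => ‖(u t - util t) ⊔ 0‖ with hhdef
  have hnormsup : Continuous fun w : BoundedContinuousFunction {r : ℝ // 0 ≤ r} ℝ => ‖w ⊔ 0‖ :=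
    (continuous_id.sup continuous_const).norm
  have hch : ContinuousOn h (Ico 0 T') := hnormsup.comp_continuousOn (hcu.sub hcutil)
  set φ : ℝ → ℝ := fun t => h t + ‖util t - util τ‖ with hφdef
  have hcφ : ContinuousWithinAt φ (Ico 0 T') τ :=
    ((hch τ hτmem).add (((hcutil.sub continuousOn_const) τ hτmem).norm))
  have hφτ : φ τ = 0 := by
    have h0 : h τ = 0 := bcf_norm_sup_eq_zero _ (fun x => by
      simp only [BoundedContinuousFunction.coe_sub, Pi.sub_apply]
      exact sub_nonpos.2 (hle x))
    simp [hφdef, h0]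
  have hev : φ ⁻¹' (Iio ε) ∈ nhdsWithin τ (Ico 0 T') := by
    apply hcφ
    rw [hφτ]
    exact Iio_mem_nhds hε
  rw [Metric.mem_nhdsWithin_iff] at hev
  obtain ⟨r, hr, hrsub⟩ := hev
  set δ : ℝ := min (min ((T' - τ)/2) (r/2)) (1/(2*((K:ℝ)+1))) with hδdef
  have hKpos : (0:ℝ) < (K:ℝ) + 1 := by positivity
  have hδpos : 0 < δ := by
    apply lt_min (lt_min (by linarith) (by linarith))
    positivity
  have hδT : δ ≤ (T' - τ)/2 := (min_le_left _ _).trans (min_le_left _ _)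
  have hδr : δ ≤ r/2 := (min_le_left _ _).trans (min_le_right _ _)
  have hδK : δ ≤ 1/(2*((K:ℝ)+1)) := min_le_right _ _
  have hKδ : (K:ℝ) * δ ≤ 1/2 := by
    have h1 : (K:ℝ) * δ ≤ (K:ℝ) * (1/(2*((K:ℝ)+1))) :=
      mul_le_mul_of_nonneg_left hδK K.coe_nonneg
    have h2 : (K:ℝ) * (1/(2*((K:ℝ)+1))) ≤ 1/2 := by
      rw [mul_one_div, div_le_div_iff₀ (by positivity) (by norm_num)]
      nlinarith [K.coe_nonneg]
    linarith
  have hIccsub : Icc τ (τ + δ) ⊆ Ico 0 T' := by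
    intro t ht
    exact ⟨le_trans hτ0 ht.1, by have := ht.2; have := hδT; linarith⟩
  have hsmall : ∀ t ∈ Icc τ (τ + δ), φ t < ε := by
    intro t ht
    apply hrsub
    refine ⟨?_, hIccsub ht⟩
    rw [Metric.mem_ball, Real.dist_eq, abs_of_nonneg (by linarith [ht.1])]
    linarith [ht.2]
  obtain ⟨ts, hts, htsmax'⟩ := isCompact_Icc.exists_isMaxOn
    (nonempty_Icc.2 (by linarith)) (hch.mono hIccsub)
  have htsmax : ∀ y ∈ Icc τ (τ + δ), h y ≤ h ts := fun y hy => htsmax' hy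
  set M := h ts with hMdef
  have hM0 : 0 ≤ M := norm_nonneg _
  -- key derivative bound
  have hbound : ∀ s ∈ Icc τ (τ + δ), ∀ x, F (u s) x - Ftil (util s) x ≤ (K:ℝ) * M := by
    intro s hs x
    have hsmem : s ∈ Ico 0 T' := hIccsub hs
    set w := u s ⊔ util s with hwdef
    have hwval : ∀ y, w y = max (u s y) (util s y) := fun y => rfl
    have hwx : ∀ y, a < w y := fun y => by
      rw [hwval]
      exact lt_of_lt_of_le (hutilmem s (hsubTtil hsmem) y) (le_max_right _ _)
    have husle : ∀ y, u s y ≤ w y := fun y => by rw [hwval]; exact le_max_left _ _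
    have h1 : F (u s) x ≤ Ftil w x := hmono (u s) w (humem s (hsubT hsmem)) hwx husle x
    have hdist_w_us : dist w (util s) = h s := by
      rw [dist_eq_norm, hwdef, bcf_sup_sub]
    have hφs : φ s < ε := hsmall s hs
    have hφs' : h s + ‖util s - util τ‖ < ε := hφs
    have hh0 : 0 ≤ h s := norm_nonneg _
    have hwmem : w ∈ Metric.ball (util τ) ε ∩
        {w : BoundedContinuousFunction {r : ℝ // 0 ≤ r} ℝ | ∀ x, a < w x} := by
      refine ⟨?_, hwx⟩
      rw [Metric.mem_ball]
      calc dist w (util τ) ≤ dist w (util s) + dist (util s) (util τ) := dist_triangle _ _ _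
        _ = h s + ‖util s - util τ‖ := by rw [hdist_w_us, dist_eq_norm]
        _ < ε := hφs'
    have hutilmem' : util s ∈ Metric.ball (util τ) ε ∩
        {w : BoundedContinuousFunction {r : ℝ // 0 ≤ r} ℝ | ∀ x, a < w x} := by
      refine ⟨?_, hutilmem s (hsubTtil hsmem)⟩
      rw [Metric.mem_ball, dist_eq_norm]
      linarith
    have h2 : dist (Ftil w) (Ftil (util s)) ≤ (K:ℝ) * dist w (util s) :=
      hK.dist_le_mul w hwmem (util s) hutilmem'
    have h3 : Ftil w x - Ftil (util s) x ≤ ‖Ftil w - Ftil (util s)‖ := by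
      have : Ftil w x - Ftil (util s) x = (Ftil w - Ftil (util s)) x := by
        simp [BoundedContinuousFunction.coe_sub]
      rw [this]
      exact (le_abs_self _).trans ((Ftil w - Ftil (util s)).norm_coe_le_norm x)
    have h4 : h s ≤ M := htsmax s hs
    calc F (u s) x - Ftil (util s) x ≤ Ftil w x - Ftil (util s) x := by linarith
      _ ≤ ‖Ftil w - Ftil (util s)‖ := h3
      _ = dist (Ftil w) (Ftil (util s)) := (dist_eq_norm _ _).symm
      _ ≤ (K:ℝ) * dist w (util s) := h2
      _ = (K:ℝ) * h s := by rw [hdist_w_us]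
      _ ≤ (K:ℝ) * M := mul_le_mul_of_nonneg_left h4 K.coe_nonneg
  -- key integral estimate via monotonicity
  have hfle : ∀ x, u ts x - util ts x ≤ (K:ℝ) * M * (ts - τ) := by
    intro x
    set L := BoundedContinuousFunction.evalCLM (𝕜 := ℝ)
      (α := {r : ℝ // 0 ≤ r}) (β := ℝ) x with hLdef
    set g : ℝ → ℝ := fun s => (K:ℝ) * M * s - (u s x - util s x) with hgdef
    have hg : ∀ s ∈ Icc τ (τ + δ),
        HasDerivWithinAt g ((K:ℝ) * M - (F (u s) x - Ftil (util s) x)) (Icc τ (τ + δ)) s := by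
      intro s hs
      have hsm := hIccsub hs
      have hd : HasDerivWithinAt (fun t => u t - util t)
          (F (u s) - Ftil (util s)) (Icc τ (τ + δ)) s :=
        ((hu s (hsubT hsm)).mono (hIccsub.trans hsubT)).sub
          ((hutil s (hsubTtil hsm)).mono (hIccsub.trans hsubTtil))
      have hLd : HasDerivWithinAt (fun t => L (u t - util t))
          (L (F (u s) - Ftil (util s))) (Icc τ (τ + δ)) s :=
        L.hasFDerivAt.comp_hasDerivWithinAt s hd
      have hLd' : HasDerivWithinAt (fun t => u t x - util t x)
          (F (u s) x - Ftil (util s) x) (Icc τ (τ + δ)) s := by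
        have e1 : (fun t => L (u t - util t)) = fun t => u t x - util t x := by
          funext t
          simp [hLdef, BoundedContinuousFunction.evalCLM_apply,
            BoundedContinuousFunction.coe_sub, Pi.sub_apply]
        have e2 : L (F (u s) - Ftil (util s)) = F (u s) x - Ftil (util s) x := by
          simp [hLdef, BoundedContinuousFunction.evalCLM_apply,
            BoundedContinuousFunction.coe_sub, Pi.sub_apply]
        rw [← e1, ← e2]
        exact hLd
      have hid : HasDerivWithinAt (fun s : ℝ => (K:ℝ) * M * s)
          ((K:ℝ) * M) (Icc τ (τ + δ)) s := by
        simpa using (hasDerivWithinAt_id s (Icc τ (τ + δ))).const_mul ((K:ℝ) * M)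
      exact hid.sub hLd'
    have hgc : ContinuousOn g (Icc τ (τ + δ)) := fun s hs => (hg s hs).continuousWithinAt
    have hmonog : MonotoneOn g (Icc τ (τ + δ)) := by
      apply monotoneOn_of_hasDerivWithinAt_nonneg (convex_Icc _ _) hgc
        (f' := fun s => (K:ℝ) * M - (F (u s) x - Ftil (util s) x))
      · intro s hs
        rw [interior_Icc] at hs ⊢
        exact (hg s (Ioo_subset_Icc_self hs)).mono Ioo_subset_Icc_self
      · intro s hs
        rw [interior_Icc] at hs
        have := hbound s (Ioo_subset_Icc_self hs) x
        linarith
    have hmono2 : g τ ≤ g ts :=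
      hmonog ⟨le_refl τ, by linarith⟩ hts hts.1
    have hfτ : u τ x - util τ x ≤ 0 := sub_nonpos.2 (hle x)
    have hgτ : g τ = (K:ℝ) * M * τ - (u τ x - util τ x) := rfl
    have hgts : g ts = (K:ℝ) * M * ts - (u ts x - util ts x) := rfl
    rw [hgτ, hgts] at hmono2
    have : (K:ℝ) * M * (ts - τ) = (K:ℝ) * M * ts - (K:ℝ) * M * τ := by ring
    linarith
  have hMle : M ≤ 0 := by
    by_contra hMc
    push_neg at hMc
    have hKMδ : (K:ℝ) * M * (ts - τ) ≤ M / 2 := by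
      have hts2 : ts - τ ≤ δ := by linarith [hts.2]
      have hts1 : 0 ≤ ts - τ := by linarith [hts.1]
      have h1 : (K:ℝ) * (ts - τ) ≤ (K:ℝ) * δ :=
        mul_le_mul_of_nonneg_left hts2 K.coe_nonneg
      nlinarith [K.coe_nonneg]
    have h5 : h ts ≤ M / 2 := by
      rw [hhdef]
      rw [BoundedContinuousFunction.norm_le (by linarith : (0:ℝ) ≤ M/2)]
      intro x
      have hx := hfle x
      have hval : ((u ts - util ts) ⊔ 0) x = max (u ts x - util ts x) 0 := rfl
      rw [Real.norm_eq_abs, hval, abs_of_nonneg (le_max_right _ _)]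
      exact max_le (by linarith) (by linarith)
    rw [← hMdef] at h5
    linarith
  refine ⟨δ, hδpos, ?_⟩
  intro t ht x
  have h1 : u t x - util t x ≤ ‖(u t - util t) ⊔ 0‖ := by
    have := bcf_val_le_norm_sup (u t - util t) x
    simpa [BoundedContinuousFunction.coe_sub, Pi.sub_apply] using this
  have h2 : h t ≤ M := htsmax t ht
  have : u t x - util t x ≤ 0 := by
    calc u t x - util t x ≤ h t := h1
      _ ≤ M := h2
      _ ≤ 0 := hMle
  linarith

/-- comparison theorem for ODEs on the Banach space of bounded continuous
functions on `[0,∞)`.  `𝒞` is the set of bounded continuous functions with values `> a`. -/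
theorem banach_comparison (a : ℝ) (ha : 0 < a)
    (F Ftil : BoundedContinuousFunction {r : ℝ // 0 ≤ r} ℝ →
      BoundedContinuousFunction {r : ℝ // 0 ≤ r} ℝ)
    (hmono : ∀ v vtil : BoundedContinuousFunction {r : ℝ // 0 ≤ r} ℝ,
      (∀ x, a < v x) → (∀ x, a < vtil x) → (∀ x, v x ≤ vtil x) →
      ∀ x, F v x ≤ Ftil vtil x)
    (hlip : ∀ v : BoundedContinuousFunction {r : ℝ // 0 ≤ r} ℝ, (∀ x, a < v x) →
      ∃ ε > (0:ℝ), ∃ K : NNReal, LipschitzOnWith K Ftil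
        (Metric.ball v ε ∩ {w : BoundedContinuousFunction {r : ℝ // 0 ≤ r} ℝ | ∀ x, a < w x}))
    (T Ttil : ℝ)
    (util u : ℝ → BoundedContinuousFunction {r : ℝ // 0 ≤ r} ℝ)
    (hutilmem : ∀ t ∈ Ico (0:ℝ) Ttil, ∀ x, a < util t x)
    (hutil : ∀ t ∈ Ico (0:ℝ) Ttil, HasDerivWithinAt util (Ftil (util t)) (Ico 0 Ttil) t)
    (humem : ∀ t ∈ Ico (0:ℝ) T, ∀ x, a < u t x)
    (hu : ∀ t ∈ Ico (0:ℝ) T, HasDerivWithinAt u (F (u t)) (Ico 0 T) t)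
    (hinit : u 0 = util 0) :
    ∀ t ∈ Ico (0:ℝ) (min T Ttil), ∀ x, u t x ≤ util t x := by
  intro t ht
  set T' := min T Ttil with hT'def
  have hsubT : Ico (0:ℝ) T' ⊆ Ico 0 T := Ico_subset_Ico_right (min_le_left _ _)
  have hsubTtil : Ico (0:ℝ) T' ⊆ Ico 0 Ttil := Ico_subset_Ico_right (min_le_right _ _)
  set s : Set ℝ := {τ | ∀ x, u τ x ≤ util τ x} with hsdef
  have hsubt : Icc (0:ℝ) t ⊆ Ico 0 T' := fun z hz => ⟨hz.1, lt_of_le_of_lt hz.2 ht.2⟩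
  have hcu : ContinuousOn u (Ico 0 T') := fun z hz =>
    ((hu z (hsubT hz)).continuousWithinAt).mono hsubT
  have hcutil : ContinuousOn util (Ico 0 T') := fun z hz =>
    ((hutil z (hsubTtil hz)).continuousWithinAt).mono hsubTtil
  have hnormsup : Continuous fun w : BoundedContinuousFunction {r : ℝ // 0 ≤ r} ℝ => ‖w ⊔ 0‖ :=
    (continuous_id.sup continuous_const).norm
  have hch : ContinuousOn (fun τ => ‖(u τ - util τ) ⊔ 0‖) (Icc 0 t) :=
    (hnormsup.comp_continuousOn ((hcu.sub hcutil).mono hsubt))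
  have hclosed : IsClosed (s ∩ Icc 0 t) := by
    have heq : s ∩ Icc 0 t = Icc 0 t ∩ (fun τ => ‖(u τ - util τ) ⊔ 0‖) ⁻¹' (Iic 0) := by
      ext z
      constructor
      · rintro ⟨hzs, hzt⟩
        refine ⟨hzt, ?_⟩
        simp only [mem_preimage, mem_Iic]
        rw [bcf_norm_sup_eq_zero _ (fun x => by
          simp only [BoundedContinuousFunction.coe_sub, Pi.sub_apply]
          exact sub_nonpos.2 (hzs x))]
      · rintro ⟨hzt, hz⟩
        simp only [mem_preimage, mem_Iic] at hz
        refine ⟨fun x => ?_, hzt⟩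
        have h1 : u z x - util z x ≤ ‖(u z - util z) ⊔ 0‖ := by
          have := bcf_val_le_norm_sup (u z - util z) x
          simpa [BoundedContinuousFunction.coe_sub, Pi.sub_apply] using this
        linarith
    rw [heq]
    exact hch.preimage_isClosed_of_isClosed isClosed_Icc isClosed_Iic
  have h0 : (0:ℝ) ∈ s := fun x => by rw [hinit]
  have hmain : Icc (0:ℝ) t ⊆ s := by
    apply hclosed.Icc_subset_of_forall_exists_gt h0
    intro z hz y hy
    have hzs := hz.1
    have hz0 := hz.2.1
    have hzt := hz.2.2
    have hzT' : z < T' := lt_trans hzt ht.2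
    obtain ⟨δ, hδ, hloc⟩ := key_local a F Ftil hmono hlip T Ttil util u
      hutilmem hutil humem hu z hz0 hzT' hzs
    set z' : ℝ := min (z + δ) (min y t) with hz'def
    have hz'gt : z < z' := by
      apply lt_min (by linarith) (lt_min hy hzt)
    refine ⟨z', ?_, hz'gt, (min_le_right _ _).trans (min_le_left _ _)⟩
    exact hloc z' ⟨le_of_lt hz'gt, min_le_left _ _⟩
  exact hmain ⟨ht.1, le_refl t⟩
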